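/- arXiv:2504.13809 — 2 statements merged into one kernel-verified Lean document; each statement's English description precedes it below -/
import Mathlib

section
/- Let B be a real m×n matrix, L a real m×r matrix, R a real s×n matrix, and let P be a real r×m matrix with ‖P‖₂ ≤ 1 and Q a real n×s matrix with ‖Q‖₂ ≤ 1 (for instance, row- and column-selection matrices). Then ‖B − L (P B Q) R‖₂ ≤ (1/2)(1 + ‖R‖₂) · ‖B − L P B‖₂ + (1/2)(1 + ‖L‖₂) · ‖B − B Q R‖₂. In particular, the error of a two-sided skeletonization B ≈ L B_{skel} R, where B_{skel} = P B Q is a row-and-column submatrix of B, is controlled by the separate target-skeletonization error ‖B − L P B‖₂ and source-skeletonization error ‖B − B Q R‖₂. -/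
/-- Spectral norm (ℓ²-operator norm) of a real matrix. -/
noncomputable def specNorm {m n : ℕ} (A : Matrix (Fin m) (Fin n) ℝ) : ℝ :=
  ‖LinearMap.toContinuousLinearMap (Matrix.toEuclideanLin A)‖

lemma specNorm_nonneg {m n : ℕ} (A : Matrix (Fin m) (Fin n) ℝ) : 0 ≤ specNorm A :=
  norm_nonneg _

lemma specNorm_add_le {m n : ℕ} (A B : Matrix (Fin m) (Fin n) ℝ) :
    specNorm (A + B) ≤ specNorm A + specNorm B := by
  rw [specNorm, map_add, map_add]
  exact norm_add_le _ _

lemma specNorm_mul_le {m n k : ℕ} (A : Matrix (Fin m) (Fin n) ℝ) (B : Matrix (Fin n) (Fin k) ℝ) :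
    specNorm (A * B) ≤ specNorm A * specNorm B := by
  have h : LinearMap.toContinuousLinearMap (Matrix.toEuclideanLin (A * B)) =
      (LinearMap.toContinuousLinearMap (Matrix.toEuclideanLin A)).comp
        (LinearMap.toContinuousLinearMap (Matrix.toEuclideanLin B)) := by
    ext x
    simp [Matrix.toEuclideanLin_eq_toLin,
      Matrix.toLin_mul (PiLp.basisFun 2 ℝ (Fin k)) (PiLp.basisFun 2 ℝ (Fin n))
        (PiLp.basisFun 2 ℝ (Fin m)) A B]
  rw [specNorm, h]
  exact ContinuousLinearMap.opNorm_comp_le _ _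

/-- Splitting of the two-sided skeletonization error into separate target- and
source-skeletonization errors (Section 4.1 of the paper). -/
theorem skeletonization_error_split {m n r s : ℕ}
    (B : Matrix (Fin m) (Fin n) ℝ) (L : Matrix (Fin m) (Fin r) ℝ)
    (R : Matrix (Fin s) (Fin n) ℝ) (P : Matrix (Fin r) (Fin m) ℝ)
    (Q : Matrix (Fin n) (Fin s) ℝ) (hP : specNorm P ≤ 1) (hQ : specNorm Q ≤ 1) :
    specNorm (B - L * (P * B * Q) * R) ≤
      1 / 2 * (1 + specNorm R) * specNorm (B - L * (P * B)) +
      1 / 2 * (1 + specNorm L) * specNorm (B - B * Q * R) := by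
  set X := B - L * (P * B * Q) * R with hX
  set Et := B - L * (P * B) with hEt
  set Es := B - B * Q * R with hEs
  have hL0 := specNorm_nonneg L
  have hR0 := specNorm_nonneg R
  have hP0 := specNorm_nonneg P
  have hQ0 := specNorm_nonneg Q
  have hEt0 := specNorm_nonneg Et
  have hEs0 := specNorm_nonneg Es
  -- bound 1 : ‖X‖ ≤ ‖Et‖ + ‖L‖‖Es‖
  have hb1 : specNorm X ≤ specNorm Et + specNorm L * specNorm Es := by
    have hid : X = Et + (L * P) * Es := by
      rw [hX, hEt, hEs]
      simp only [Matrix.mul_sub, Matrix.sub_mul, Matrix.mul_assoc]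
      abel
    have h1 : specNorm X ≤ specNorm Et + specNorm ((L * P) * Es) := by
      rw [hid]; exact specNorm_add_le _ _
    have h2 : specNorm ((L * P) * Es) ≤ specNorm L * specNorm P * specNorm Es :=
      le_trans (specNorm_mul_le _ _) (by
        have := specNorm_mul_le L P
        nlinarith [specNorm_nonneg (L * P), specNorm_nonneg Es])
    nlinarith [mul_nonneg (mul_nonneg hL0 hEs0) (sub_nonneg.mpr hP)]
  -- bound 2 : ‖X‖ ≤ ‖Es‖ + ‖R‖‖Et‖
  have hb2 : specNorm X ≤ specNorm Es + specNorm R * specNorm Et := by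
    have hid : X = Es + Et * (Q * R) := by
      rw [hX, hEt, hEs]
      simp only [Matrix.mul_sub, Matrix.sub_mul, Matrix.mul_assoc]
      abel
    have h1 : specNorm X ≤ specNorm Es + specNorm (Et * (Q * R)) := by
      rw [hid]; exact specNorm_add_le _ _
    have h2 : specNorm (Et * (Q * R)) ≤ specNorm Et * (specNorm Q * specNorm R) :=
      le_trans (specNorm_mul_le _ _) (by
        have := specNorm_mul_le Q R
        nlinarith [specNorm_nonneg (Q * R), specNorm_nonneg Et])
    nlinarith [mul_nonneg (mul_nonneg hR0 hEt0) (sub_nonneg.mpr hQ)]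
  nlinarith
end

section
/- Let B, T, C, E be real matrices with B = T C + E, where B is m×n, T is m×q, C is q×n and E is m×n. Let W be a real n×n matrix, Q a real n×s matrix with ‖Q‖₂ ≤ 1 (e.g., a column-selection matrix), and M a real s×n matrix. Then ‖B W − (B Q) M‖₂ ≤ ‖T‖₂ · ‖C W − (C Q) M‖₂ + ‖E‖₂ · (‖W‖₂ + ‖M‖₂). In particular, if the far-field kernel matrix B factors through proxy interactions C up to an error E, then the source-skeletonization error of B is controlled by the source-skeletonization error of the proxy matrix C plus a term proportional to ‖E‖₂. -/
open scoped Matrix.Norms.L2Operator in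
lemma specNorm_eq {m n : ℕ} (A : Matrix (Fin m) (Fin n) ℝ) : specNorm A = ‖A‖ := rfl

/-- Introducing the proxy operator `T` into the far-field skeletonization error
(Section 4.1 of the paper): if `B = T C + E`, then the source-skeletonization error
of `B` is controlled by that of the proxy matrix `C` plus a term proportional to
`‖E‖₂`. -/
theorem proxy_factorization_error {m n q s : ℕ}
    (B E : Matrix (Fin m) (Fin n) ℝ) (T : Matrix (Fin m) (Fin q) ℝ)
    (C : Matrix (Fin q) (Fin n) ℝ) (hBE : B = T * C + E)
    (W : Matrix (Fin n) (Fin n) ℝ) (Q : Matrix (Fin n) (Fin s) ℝ)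
    (hQ : specNorm Q ≤ 1) (M : Matrix (Fin s) (Fin n) ℝ) :
    specNorm (B * W - B * Q * M) ≤
      specNorm T * specNorm (C * W - C * Q * M) +
        specNorm E * (specNorm W + specNorm M) := by
  open scoped Matrix.Norms.L2Operator in
  simp only [specNorm_eq] at *
  have key : B * W - B * Q * M = T * (C * W - C * Q * M) + E * (W - Q * M) := by
    subst hBE
    simp only [Matrix.add_mul, Matrix.mul_sub, Matrix.mul_assoc]
    abel
  rw [key]
  refine (norm_add_le _ _).trans (add_le_add ?_ ?_)
  · exact Matrix.l2_opNorm_mul T _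
  · refine (Matrix.l2_opNorm_mul E _).trans ?_
    refine mul_le_mul_of_nonneg_left ?_ (norm_nonneg E)
    refine (norm_sub_le _ _).trans (add_le_add le_rfl ?_)
    calc ‖Q * M‖ ≤ ‖Q‖ * ‖M‖ := Matrix.l2_opNorm_mul Q M
      _ ≤ 1 * ‖M‖ := mul_le_mul_of_nonneg_right hQ (norm_nonneg M)
      _ = ‖M‖ := one_mul _
end
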